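/- Let n ≥ 1 and let k : ZMod n → ℕ be a function with ∑_{i} k(i) = n. Then there exists z ∈ ZMod n such that for every i with 1 ≤ i ≤ n − 1, we have ∑_{j=1}^{i} k(z − j) ≤ i. -/

import Mathlib

theorem stmt_0 (n : ℕ) (hn : 1 ≤ n) [NeZero n] (k : ZMod n → ℕ)
    (hk : ∑ i : ZMod n, k i = n) :
    ∃ z : ZMod n, ∀ i : ℕ, 1 ≤ i → i ≤ n - 1 →
      ∑ j ∈ Finset.Icc 1 i, k (z - (j : ZMod n)) ≤ i := by
  set a : ℕ → ℤ := fun j => (k (j : ZMod n) : ℤ) - 1 with ha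
  set Q : ℕ → ℤ := fun t => ∑ j ∈ Finset.range t, a j with hQ
  have hsum : ∑ j ∈ Finset.range n, k ((j : ℕ) : ZMod n) = n := by
    have : ∑ j ∈ Finset.range n, k ((j : ℕ) : ZMod n) = ∑ i : ZMod n, k i := by
      apply Finset.sum_nbij' (fun j : ℕ => ((j : ℕ) : ZMod n)) (fun i : ZMod n => i.val)
      · intro j hj; exact Finset.mem_univ _
      · intro i _; exact Finset.mem_range.mpr (ZMod.val_lt i)
      · intro j hj; exact ZMod.val_natCast_of_lt (Finset.mem_range.mp hj)
      · intro i _; exact ZMod.natCast_rightInverse i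
      · intro j _; rfl
    rw [this, hk]
  have hQn : Q n = 0 := by
    simp only [hQ, ha, Finset.sum_sub_distrib, Finset.sum_const, Finset.card_range,
      nsmul_eq_mul, mul_one]
    rw [← Nat.cast_sum]
    rw [hsum]
    ring
  have hper : ∀ j, a (j + n) = a j := by
    intro j
    simp only [ha]
    congr 2
    push_cast
    simp
  have hQadd : ∀ t, Q (t + n) = Q t := by
    intro t
    induction t with
    | zero => simpa [hQ] using hQn
    | succ t ih =>
      have h1 : t + 1 + n = (t + n) + 1 := by omega
      rw [h1]
      show ∑ j ∈ Finset.range ((t + n) + 1), a j = _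
      rw [Finset.sum_range_succ, hper]
      show Q (t + n) + a t = Q (t + 1)
      rw [ih]
      exact (Finset.sum_range_succ a t).symm
  obtain ⟨t0, ht0mem, ht0min⟩ := Finset.exists_min_image (Finset.range n) Q
    ⟨0, Finset.mem_range.mpr hn⟩
  have ht0lt : t0 < n := Finset.mem_range.mp ht0mem
  refine ⟨(t0 : ZMod n), ?_⟩
  intro i hi1 hi2
  -- window sum lemma
  have hwin : ∀ m : ℕ, m ≤ t0 + n →
      ∑ j ∈ Finset.Icc 1 m, a (t0 + n - j) = Q (t0 + n) - Q (t0 + n - m) := by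
    intro m
    induction m with
    | zero => intro _; simp
    | succ m ih =>
      intro hm
      rw [Finset.sum_Icc_succ_top (by omega), ih (by omega)]
      have h1 : t0 + n - m = (t0 + n - (m + 1)) + 1 := by omega
      have h2 : Q ((t0 + n - (m+1)) + 1) = Q (t0 + n - (m+1)) + a (t0 + n - (m+1)) := by
        rw [hQ]; exact Finset.sum_range_succ a _
      rw [h1, h2]; ring
  have hcast : ∀ j ∈ Finset.Icc 1 i, ((t0 + n - j : ℕ) : ZMod n) = (t0 : ZMod n) - (j : ℕ) := by
    intro j hj
    have hj' : j ≤ t0 + n := by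
      have := (Finset.mem_Icc.mp hj).2; omega
    push_cast [Nat.cast_sub hj']
    simp [ZMod.natCast_self]
  have key : (∑ j ∈ Finset.Icc 1 i, (k ((t0 : ZMod n) - (j : ℕ)) : ℤ)) - i
      = Q (t0 + n) - Q (t0 + n - i) := by
    have step : ∑ j ∈ Finset.Icc 1 i, a (t0 + n - j)
        = (∑ j ∈ Finset.Icc 1 i, (k ((t0 : ZMod n) - (j : ℕ)) : ℤ)) - i := by
      rw [Finset.sum_congr rfl (fun j hj =>
        show a (t0 + n - j) = (k ((t0 : ZMod n) - (j : ℕ)) : ℤ) - 1 from by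
          simp only [ha]; rw [hcast j hj])]
      rw [Finset.sum_sub_distrib]
      simp [Nat.card_Icc]
    rw [← step, hwin i (by omega)]
  have hmin : Q t0 ≤ Q (t0 + n - i) := by
    by_cases hc : t0 + n - i < n
    · exact ht0min _ (Finset.mem_range.mpr hc)
    · have h1 : t0 + n - i = (t0 - i) + n := by omega
      have h2 : t0 - i < n := by omega
      rw [h1, hQadd]
      exact ht0min _ (Finset.mem_range.mpr h2)
  have : (∑ j ∈ Finset.Icc 1 i, (k ((t0 : ZMod n) - (j : ℕ)) : ℤ)) ≤ i := by
    have hq : Q (t0 + n) = Q t0 := hQadd t0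
    omega
  exact_mod_cast this
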